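/- Let J ⊆ ℝ be an open interval and F : J → ℝ with F(u) ≠ u for all u ∈ J. Let G : J → ℝ be differentiable with G'(u) = 1/(F(u) − u). Let r : (θ₁, θ₂) → ℝ be twice differentiable, with (θ₁, θ₂) ⊆ (0, π), r'(θ)·cot(θ) + r(θ) ∈ J for all θ, and suppose r solves the ODE r''(θ) + r(θ) = F(r'(θ)·cot(θ) + r(θ)) on (θ₁, θ₂). Then the function I(θ) = (1/sin(θ))·exp( G(r'(θ)·cot(θ) + r(θ)) ) is constant on (θ₁, θ₂). -/

import Mathlib

/-- First integral of the Weingarten ODE: if `r'' + r = F(r' cot θ + r)` on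
`(θ₁, θ₂) ⊆ (0, π)` and `G'(u) = 1/(F u - u)`, then
`I(θ) = (1/sin θ) exp(G(r' cot θ + r))` is constant on `(θ₁, θ₂)`. -/
theorem stmt_18 (J : Set ℝ) (hJopen : IsOpen J) (hJconn : J.OrdConnected)
    (F G : ℝ → ℝ) (hF : ∀ u ∈ J, F u ≠ u)
    (hG : ∀ u ∈ J, HasDerivAt G (1 / (F u - u)) u)
    (θ₁ θ₂ : ℝ) (hsub : Set.Ioo θ₁ θ₂ ⊆ Set.Ioo 0 Real.pi)
    (r r' r'' : ℝ → ℝ)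
    (hr : ∀ θ ∈ Set.Ioo θ₁ θ₂, HasDerivAt r (r' θ) θ)
    (hr' : ∀ θ ∈ Set.Ioo θ₁ θ₂, HasDerivAt r' (r'' θ) θ)
    (hmem : ∀ θ ∈ Set.Ioo θ₁ θ₂, r' θ * Real.cot θ + r θ ∈ J)
    (hode : ∀ θ ∈ Set.Ioo θ₁ θ₂, r'' θ + r θ = F (r' θ * Real.cot θ + r θ)) :
    ∃ C : ℝ, ∀ θ ∈ Set.Ioo θ₁ θ₂,
      (1 / Real.sin θ) * Real.exp (G (r' θ * Real.cot θ + r θ)) = C := by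
  rcases Set.eq_empty_or_nonempty (Set.Ioo θ₁ θ₂) with h | ⟨θ₀, hθ₀⟩
  · exact ⟨0, fun θ hθ => absurd hθ (h ▸ Set.notMem_empty θ)⟩
  set I : ℝ → ℝ := fun θ => (1 / Real.sin θ) * Real.exp (G (r' θ * Real.cot θ + r θ)) with hIdef
  have key : ∀ θ ∈ Set.Ioo θ₁ θ₂, HasDerivAt I 0 θ := by
    intro θ hθ
    have hθπ := hsub hθ
    have hsin : Real.sin θ ≠ 0 := ne_of_gt (Real.sin_pos_of_pos_of_lt_pi hθπ.1 hθπ.2)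
    have hu := hmem θ hθ
    have hFu : F (r' θ * Real.cot θ + r θ) - (r' θ * Real.cot θ + r θ) ≠ 0 :=
      sub_ne_zero.mpr (hF _ hu)
    -- derivative of cot
    have hcot : HasDerivAt Real.cot (-(1 / Real.sin θ ^ 2)) θ := by
      have h1 : HasDerivAt (fun x => Real.cos x / Real.sin x)
          ((-Real.sin θ * Real.sin θ - Real.cos θ * Real.cos θ) / (Real.sin θ)^2) θ :=
        (Real.hasDerivAt_cos θ).div (Real.hasDerivAt_sin θ) hsin
      have heq : (fun x => Real.cos x / Real.sin x) = Real.cot :=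
        funext fun x => (Real.cot_eq_cos_div_sin x).symm
      rw [heq] at h1
      convert h1 using 1
      have := Real.sin_sq_add_cos_sq θ
      field_simp
      nlinarith [Real.sin_sq_add_cos_sq θ]
    -- derivative of u
    have hU : HasDerivAt (fun x => r' x * Real.cot x + r x)
        (r'' θ * Real.cot θ + r' θ * (-(1 / Real.sin θ ^ 2)) + r' θ) θ :=
      ((hr' θ hθ).mul hcot).add (hr θ hθ)
    -- derivative of G ∘ u
    have hGU : HasDerivAt (fun x => G (r' x * Real.cot x + r x))
        ((1 / (F (r' θ * Real.cot θ + r θ) - (r' θ * Real.cot θ + r θ))) *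
          (r'' θ * Real.cot θ + r' θ * (-(1 / Real.sin θ ^ 2)) + r' θ)) θ :=
      (hG _ hu).comp θ hU
    have hE : HasDerivAt (fun x => Real.exp (G (r' x * Real.cot x + r x)))
        (Real.exp (G (r' θ * Real.cot θ + r θ)) *
          ((1 / (F (r' θ * Real.cot θ + r θ) - (r' θ * Real.cot θ + r θ))) *
          (r'' θ * Real.cot θ + r' θ * (-(1 / Real.sin θ ^ 2)) + r' θ))) θ :=
      hGU.exp
    have hinv : HasDerivAt (fun x => 1 / Real.sin x)
        (-(Real.cos θ) / Real.sin θ ^ 2) θ := by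
      have := (Real.hasDerivAt_sin θ).inv hsin
      simpa [one_div, neg_div, Pi.inv_def] using this
    have hI : HasDerivAt I
        ((-(Real.cos θ) / Real.sin θ ^ 2) * Real.exp (G (r' θ * Real.cot θ + r θ)) +
          (1 / Real.sin θ) * (Real.exp (G (r' θ * Real.cot θ + r θ)) *
          ((1 / (F (r' θ * Real.cot θ + r θ) - (r' θ * Real.cot θ + r θ))) *
          (r'' θ * Real.cot θ + r' θ * (-(1 / Real.sin θ ^ 2)) + r' θ)))) θ :=
      hinv.mul hE
    convert hI using 1
    -- show the derivative expression is zero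
    have hFeq : F (r' θ * Real.cot θ + r θ) - (r' θ * Real.cot θ + r θ)
        = r'' θ - r' θ * Real.cot θ := by
      rw [← hode θ hθ]; ring
    have hcotv : Real.cot θ = Real.cos θ / Real.sin θ := Real.cot_eq_cos_div_sin θ
    have hpyth := Real.sin_sq_add_cos_sq θ
    have hu'eq : r'' θ * Real.cot θ + r' θ * (-(1 / Real.sin θ ^ 2)) + r' θ
        = (F (r' θ * Real.cot θ + r θ) - (r' θ * Real.cot θ + r θ)) * Real.cot θ := by
      rw [hFeq, hcotv]
      field_simp
      linear_combination (r' θ) * hpyth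
    have h2 : 1 / (F (r' θ * Real.cot θ + r θ) - (r' θ * Real.cot θ + r θ)) *
        ((F (r' θ * Real.cot θ + r θ) - (r' θ * Real.cot θ + r θ)) * Real.cot θ)
        = Real.cot θ := by
      field_simp
    rw [hu'eq, h2, hcotv]
    field_simp
    ring
  refine ⟨I θ₀, fun θ hθ => ?_⟩
  have hconv : Convex ℝ (Set.Ioo θ₁ θ₂) := convex_Ioo θ₁ θ₂
  have hopen : IsOpen (Set.Ioo θ₁ θ₂) := isOpen_Ioo
  have hdiff : DifferentiableOn ℝ I (Set.Ioo θ₁ θ₂) := fun x hx =>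
    ((key x hx).differentiableAt).differentiableWithinAt
  have hzero : ∀ x ∈ Set.Ioo θ₁ θ₂, fderivWithin ℝ I (Set.Ioo θ₁ θ₂) x = 0 := by
    intro x hx
    rw [fderivWithin_of_isOpen hopen hx]
    have := (key x hx).deriv
    ext y
    simp [fderiv_apply_one_eq_deriv, this]
  exact hconv.is_const_of_fderivWithin_eq_zero hdiff hzero hθ hθ₀
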